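/- For N ≥ 2 and weights ω_n > 0 with Σ ω_n = 1 (so that not all ω_n equal 1), the Nash equilibrium is strictly Pareto inefficient relative to the proportional-fair point: Σ_n ω_n log(u_n(a^{NE})/u_n(a^{PB})) < 0. -/

import Mathlib

open Finset

/-- For N ≥ 2 and positive weights summing to one, the Nash equilibrium is
strictly Pareto inefficient: the weighted log-utility gap is strictly negative. -/
theorem typeII_nash_inefficient (N : ℕ) (hN : 2 ≤ N)
    (β τ ω : Fin N → ℝ) (μ : ℝ)
    (hβ : ∀ n, 0 < β n) (hτ : ∀ n, 0 < τ n) (hω : ∀ n, 0 < ω n) (hμ : 0 < μ)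
    (hsum : ∑ n, ω n = 1)
    (u : (Fin N → ℝ) → Fin N → ℝ)
    (hu : ∀ a n, u a n = Real.rpow (a n) (β n) * (μ - ∑ m, τ m * a m))
    (aNE aPB : Fin N → ℝ)
    (hNE : ∀ n, aNE n = β n * μ / (τ n * (1 + ∑ m, β m)))
    (hPB : ∀ n, aPB n = ω n * β n * μ / (τ n * (1 + ∑ m, ω m * β m))) :
    ∑ n, ω n * Real.log (u aNE n / u aPB n) < 0 := by
  set B := ∑ m, β m with hBdef
  set S := ∑ m, ω m * β m with hSdef
  let n0 : Fin N := ⟨0, by omega⟩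
  let n1 : Fin N := ⟨1, by omega⟩
  have hBpos : 0 < B := Finset.sum_pos (fun i _ => hβ i) ⟨n0, mem_univ _⟩
  have hSpos : 0 < S := Finset.sum_pos (fun i _ => mul_pos (hω i) (hβ i)) ⟨n0, mem_univ _⟩
  have hB1 : (0:ℝ) < 1 + B := by linarith
  have hS1 : (0:ℝ) < 1 + S := by linarith
  have hω0 : ω n0 < 1 := by
    have h01 : n1 ≠ n0 := by
      simp only [n0, n1, ne_eq, Fin.mk.injEq]
      omega
    have := Finset.single_lt_sum h01 (mem_univ n0) (mem_univ n1) (hω n1)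
      (fun k _ _ => (hω k).le)
    rw [hsum] at this
    exact this
  -- residual terms
  have hresNE : μ - ∑ m, τ m * aNE m = μ / (1 + B) := by
    have h1 : ∑ m, τ m * aNE m = B * (μ / (1 + B)) := by
      rw [hBdef, Finset.sum_mul]
      refine Finset.sum_congr rfl fun m _ => ?_
      rw [hNE m]
      field_simp [(hτ m).ne']
      rw [← hBdef]; field_simp
    rw [h1]; field_simp; ring
  have hresPB : μ - ∑ m, τ m * aPB m = μ / (1 + S) := by
    have h1 : ∑ m, τ m * aPB m = S * (μ / (1 + S)) := by
      rw [hSdef, Finset.sum_mul]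
      refine Finset.sum_congr rfl fun m _ => ?_
      rw [hPB m]
      field_simp [(hτ m).ne']
      rw [← hSdef]; field_simp
    rw [h1]; field_simp; ring
  have haNE : ∀ n, 0 < aNE n := fun n => by
    rw [hNE n]; exact div_pos (mul_pos (hβ n) hμ) (mul_pos (hτ n) hB1)
  have haPB : ∀ n, 0 < aPB n := fun n => by
    rw [hPB n]; exact div_pos (mul_pos (mul_pos (hω n) (hβ n)) hμ) (mul_pos (hτ n) hS1)
  have hratio : ∀ n, aNE n / aPB n = (1 + S) / (ω n * (1 + B)) := fun n => by
    rw [hNE n, hPB n]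
    field_simp [(hτ n).ne', (hω n).ne', (hβ n).ne']
  -- key pointwise identity
  have key : ∀ n, Real.log (u aNE n / u aPB n)
      = β n * Real.log ((1 + S) / (ω n * (1 + B))) + Real.log ((1 + S) / (1 + B)) := by
    intro n
    have h1 : u aNE n = Real.rpow (aNE n) (β n) * (μ / (1 + B)) := by rw [hu, hresNE]
    have h2 : u aPB n = Real.rpow (aPB n) (β n) * (μ / (1 + S)) := by rw [hu, hresPB]
    have hp1 : 0 < Real.rpow (aNE n) (β n) := Real.rpow_pos_of_pos (haNE n) _
    have hp2 : 0 < Real.rpow (aPB n) (β n) := Real.rpow_pos_of_pos (haPB n) _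
    have hd1 : (0:ℝ) < μ / (1 + B) := div_pos hμ hB1
    have hd2 : (0:ℝ) < μ / (1 + S) := div_pos hμ hS1
    rw [h1, h2, Real.log_div (by positivity) (by positivity),
      Real.log_mul hp1.ne' hd1.ne', Real.log_mul hp2.ne' hd2.ne']
    have hlr1 : Real.log ((aNE n).rpow (β n)) = β n * Real.log (aNE n) :=
      Real.log_rpow (haNE n) _
    have hlr2 : Real.log ((aPB n).rpow (β n)) = β n * Real.log (aPB n) :=
      Real.log_rpow (haPB n) _
    have e1 : Real.log (aNE n) - Real.log (aPB n)
        = Real.log ((1 + S) / (ω n * (1 + B))) := by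
      rw [← Real.log_div (haNE n).ne' (haPB n).ne', hratio n]
    have e2 : Real.log (μ / (1 + B)) - Real.log (μ / (1 + S))
        = Real.log ((1 + S) / (1 + B)) := by
      rw [Real.log_div hμ.ne' hB1.ne', Real.log_div hμ.ne' hS1.ne',
        Real.log_div hS1.ne' hB1.ne']
      ring
    have e1' : β n * Real.log (aNE n) - β n * Real.log (aPB n)
        = β n * Real.log ((1 + S) / (ω n * (1 + B))) := by rw [← mul_sub, e1]
    rw [hlr1, hlr2]
    linarith [e1', e2]
  -- rewrite the sum
  have hsum2 : ∑ n, ω n * Real.log (u aNE n / u aPB n)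
      = (∑ n, ω n * β n * Real.log ((1 + S) / (ω n * (1 + B))))
        + Real.log ((1 + S) / (1 + B)) := by
    have : ∀ n : Fin N, ω n * Real.log (u aNE n / u aPB n)
        = ω n * β n * Real.log ((1 + S) / (ω n * (1 + B)))
          + ω n * Real.log ((1 + S) / (1 + B)) := fun n => by rw [key n]; ring
    rw [Finset.sum_congr rfl fun n _ => this n, Finset.sum_add_distrib,
      ← Finset.sum_mul, hsum, one_mul]
  rw [hsum2]
  -- pointwise upper bounds
  have hxpos : ∀ n : Fin N, (0:ℝ) < (1 + S) / (ω n * (1 + B)) := fun n =>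
    div_pos hS1 (mul_pos (hω n) hB1)
  have hterm_le : ∀ n : Fin N, ω n * β n * Real.log ((1 + S) / (ω n * (1 + B)))
      ≤ ω n * β n * ((1 + S) / (ω n * (1 + B)) - 1) := fun n =>
    mul_le_mul_of_nonneg_left (Real.log_le_sub_one_of_pos (hxpos n))
      (mul_pos (hω n) (hβ n)).le
  have hsum_eq : ∑ n, ω n * β n * ((1 + S) / (ω n * (1 + B)) - 1)
      = B * ((1 + S) / (1 + B)) - S := by
    have : ∀ n : Fin N, ω n * β n * ((1 + S) / (ω n * (1 + B)) - 1)
        = β n * ((1 + S) / (1 + B)) - ω n * β n := fun n => by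
      field_simp [(hω n).ne']
    rw [Finset.sum_congr rfl fun n _ => this n, Finset.sum_sub_distrib,
      ← Finset.sum_mul, ← hBdef, ← hSdef]
  have hzero : B * ((1 + S) / (1 + B)) - S + ((1 + S) / (1 + B) - 1) = 0 := by
    field_simp
    ring
  by_cases hSB : S = B
  · -- strict inequality inside the sum at index n0
    have hne : (1 + S) / (ω n0 * (1 + B)) ≠ 1 := by
      rw [hSB]
      intro h
      rw [div_eq_one_iff_eq (mul_pos (hω n0) hB1).ne'] at h
      nlinarith
    have hlt : ∑ n, ω n * β n * Real.log ((1 + S) / (ω n * (1 + B)))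
        < ∑ n, ω n * β n * ((1 + S) / (ω n * (1 + B)) - 1) := by
      refine Finset.sum_lt_sum (fun n _ => hterm_le n) ⟨n0, mem_univ _, ?_⟩
      exact mul_lt_mul_of_pos_left
        (Real.log_lt_sub_one_of_pos (hxpos n0) hne) (mul_pos (hω n0) (hβ n0))
    have hlog : Real.log ((1 + S) / (1 + B)) = 0 := by
      rw [hSB, div_self hB1.ne']; exact Real.log_one
    rw [hlog]
    have : (1 + S) / (1 + B) - 1 = 0 := by rw [hSB, div_self hB1.ne']; ring
    nlinarith [hlt, hsum_eq]
  · have hle : ∑ n, ω n * β n * Real.log ((1 + S) / (ω n * (1 + B)))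
        ≤ ∑ n, ω n * β n * ((1 + S) / (ω n * (1 + B)) - 1) :=
      Finset.sum_le_sum fun n _ => hterm_le n
    have hne : (1 + S) / (1 + B) ≠ 1 := by
      intro h
      rw [div_eq_one_iff_eq hB1.ne'] at h
      exact hSB (by linarith)
    have hlt2 : Real.log ((1 + S) / (1 + B)) < (1 + S) / (1 + B) - 1 :=
      Real.log_lt_sub_one_of_pos (div_pos hS1 hB1) hne
    nlinarith [hle, hsum_eq, hlt2]
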